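/- For all integers d ≥ 0, the polynomial (m+1)^{d+1} − m^{d+1} ∈ ℂ[m] has all of its roots on the line Re(z) = −1/2. -/

import Mathlib

open Polynomial

theorem dual_typeA_roots_on_critical_line (d : ℕ) :
    ∀ z ∈ ((Polynomial.X + 1) ^ (d + 1) - Polynomial.X ^ (d + 1) : Polynomial ℂ).roots,
      z.re = -1/2 := by
  intro z hz
  have hp : ((Polynomial.X + 1) ^ (d + 1) - Polynomial.X ^ (d + 1) : Polynomial ℂ) ≠ 0 := by
    intro h
    have := congrArg (Polynomial.eval 0) h
    simp [zero_pow (Nat.succ_ne_zero d)] at this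
  have hev : (z + 1) ^ (d + 1) = z ^ (d + 1) := by
    have h2 := (Polynomial.mem_roots hp).1 hz
    simp [Polynomial.IsRoot, sub_eq_zero] at h2
    exact h2
  have habs : ‖z + 1‖ = ‖z‖ := by
    have h1 : ‖z + 1‖ ^ (d + 1) = ‖z‖ ^ (d + 1) := by
      rw [← norm_pow, ← norm_pow, hev]
    exact (pow_left_strictMonoOn₀ (Nat.succ_ne_zero d)).injOn (norm_nonneg _) (norm_nonneg _) h1
  have hsq := congrArg (· ^ 2) habs
  simp only [Complex.sq_norm] at hsq
  have h1 : Complex.normSq (z + 1) = Complex.normSq z := hsq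
  simp [Complex.normSq_apply] at h1
  nlinarith [h1]
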